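/- Let a > 0, λ > 0, x > 0, and let y₀ > 0 satisfy y₀ − x + λa(a+1)/(a+y₀)² = 0. With f(y) = (1/2)(y−x)² + λ(a+1)|y|/(a+|y|), the identity f(y₀) − f(0) = y₀²·((x − y₀)/a − 1/2) holds. -/

import Mathlib

/-- For `a > 0`, `λ > 0`, `x > 0` and a stationary point `y₀ > 0` with
`y₀ − x + λa(a+1)/(a+y₀)² = 0`, with `f(y) = (1/2)(y−x)² + λ(a+1)|y|/(a+|y|)`,
the identity `f(y₀) − f(0) = y₀²((x − y₀)/a − 1/2)` holds. -/
theorem tl1_value_gap_identity (a lam x y₀ : ℝ) (ha : 0 < a) (hlam : 0 < lam)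
    (hx : 0 < x) (hy₀ : 0 < y₀)
    (hstat : y₀ - x + lam * a * (a + 1) / (a + y₀) ^ 2 = 0) :
    ((1 / 2) * (y₀ - x) ^ 2 + lam * ((a + 1) * |y₀| / (a + |y₀|))) -
        ((1 / 2) * ((0 : ℝ) - x) ^ 2 + lam * ((a + 1) * |(0 : ℝ)| / (a + |(0 : ℝ)|))) =
      y₀ ^ 2 * ((x - y₀) / a - 1 / 2) := by
  have hay : a + y₀ ≠ 0 := by positivity
  have ha' : a ≠ 0 := ne_of_gt ha
  rw [abs_of_pos hy₀, abs_zero]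
  have h2 : lam * a * (a + 1) = (x - y₀) * (a + y₀) ^ 2 := by
    have := hstat
    field_simp at this
    linarith
  field_simp
  linear_combination (2 * a * y₀) * h2
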